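/- For each k ≥ 1 and n ≥ 0, the map π ↦ (P̂(π), Q̂(π)) given by Fomin's growth rules on the square diagram is a bijection from the set of k-colored permutations of length n onto the set of pairs of k-ribbon Fibonacci path tableaux with entries 1, ..., n having the same k-ribbon Fibonacci shape. -/

import Mathlib

namespace KRF

/-- A letter of the alphabet `{1_1, …, 1_k, 2}`:  `one j` stands for the letter `1_j`
(with `1 ≤ j ≤ k` for genuine letters), and `two` stands for the letter `2`. -/
inductive Letter (k : ℕ) : Type where
  | one : ℕ → Letter k
  | two : Letter k
deriving DecidableEq

/-- A word over the alphabet `{1_1, …, 1_k, 2}`, listed from the leftmost letter to the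
rightmost letter. -/
abbrev Word (k : ℕ) := List (Letter k)

/-- The contribution of a letter to the rank: each `1_j` counts `1` and each `2` counts `2`. -/
def Letter.rank {k : ℕ} : Letter k → ℕ
  | .one _ => 1
  | .two => 2

/-- The rank of a word: the sum of its letters. -/
def Word.rank {k : ℕ} (w : Word k) : ℕ := (w.map Letter.rank).sum

/-- The letter `1_j` is valid when `1 ≤ j ≤ k`. -/
def Letter.Valid (k : ℕ) : Letter k → Prop
  | .one j => 1 ≤ j ∧ j ≤ k
  | .two => True

/-- A genuine word of the Fibonacci poset `Z(k)`: all of its letters are valid. -/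
def Word.Valid (k : ℕ) (w : Word k) : Prop := ∀ l ∈ w, l.Valid k

/-- The cover relation of the Fibonacci poset `Z(k)`:  `z` is covered by `w` iff `z` is
obtained from `w` either by changing a `2` into some `1_j` when all letters to the left of
that `2` are `2`'s, or by deleting the leftmost letter of the form `1_j`. -/
def ZCovers (k : ℕ) (z w : Word k) : Prop :=
  (∃ (p s : Word k) (j : ℕ), (∀ l ∈ p, l = Letter.two) ∧ 1 ≤ j ∧ j ≤ k ∧
      w = p ++ Letter.two :: s ∧ z = p ++ Letter.one j :: s) ∨
  (∃ (p s : Word k) (j : ℕ), (∀ l ∈ p, l = Letter.two) ∧ 1 ≤ j ∧ j ≤ k ∧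
      w = p ++ Letter.one j :: s ∧ z = p ++ s)

/-- `c 0 ⋖ c 1 ⋖ ⋯ ⋖ c n` is a saturated chain in `Z(k)` starting at the empty word. -/
def IsZChain (k n : ℕ) (c : ℕ → Word k) : Prop :=
  c 0 = [] ∧ ∀ i, i < n → ZCovers k (c i) (c (i + 1))

end KRF
namespace KRF

/-- A column of a (tiled and filled) `k`-ribbon Fibonacci tableau.
`single h v` is a column of height 1 (shape letter `1_h`) tiled by one `k`-ribbon of
height `h` filled with the value `v`.
`double ht hb vt vb` is a column of height 2 (shape letter `2`) tiled by a `k`-ribbon of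
height `ht` filled with `vt` stacked on top of a `k`-ribbon of height `hb` (always
`hb = k + 1 - ht` for genuine tableaux) filled with `vb`. -/
inductive Col (k : ℕ) : Type where
  | single : ℕ → ℕ → Col k
  | double : ℕ → ℕ → ℕ → ℕ → Col k
deriving DecidableEq

/-- A (tiled, filled) `k`-ribbon Fibonacci tableau: its list of columns, from the leftmost
column to the rightmost one. -/
abbrev Tab (k : ℕ) := List (Col k)

/-- The shape letter of a column. -/
def Col.shape {k : ℕ} : Col k → Letter k
  | .single h _ => Letter.one h
  | .double _ _ _ _ => Letter.two

/-- The `k`-ribbon Fibonacci shape (a word) underlying a tableau. -/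
def Tab.shape {k : ℕ} (T : Tab k) : Word k := T.map Col.shape

/-- The value in the bottom `k`-ribbon of a column. -/
def Col.bottomVal {k : ℕ} : Col k → ℕ
  | .single _ v => v
  | .double _ _ _ vb => vb

/-- The heights occurring in a column are genuine ribbon heights: between `1` and `k`,
and in a column of height 2 the two heights sum to `k + 1`. -/
def Col.HeightsValid (k : ℕ) : Col k → Prop
  | .single h _ => 1 ≤ h ∧ h ≤ k
  | .double ht hb _ _ => 1 ≤ ht ∧ ht ≤ k ∧ hb = k + 1 - ht

/-- The list of all entries of a tableau (one for each `k`-ribbon). -/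
def Tab.entries {k : ℕ} (T : Tab k) : List ℕ :=
  (T.map fun c => match c with
    | Col.single _ v => [v]
    | Col.double _ _ vt vb => [vt, vb]).flatten

/-- The list of the bottom-ribbon values of the columns of a tableau. -/
def Tab.bottoms {k : ℕ} (T : Tab k) : List ℕ := T.map Col.bottomVal

/-- `T` is a standard `k`-ribbon Fibonacci tableau with entries `1, …, n`:
heights are valid, the entries are exactly `1, …, n`,  and the tableau can be built by
placing `n, n-1, …, 1` in order, each new `k`-ribbon being either appended (as a new
rightmost height-1 column) to the shape formed by the `k`-ribbons containing larger
entries, or stacked on top of a single such `k`-ribbon.  Equivalently (and this is how we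
formalize it): the bottom entries strictly decrease from left to right (in particular the
`k`-ribbon containing the leftmost square of the bottom row contains `n`), and in each
column of height 2 the top entry is smaller than the bottom entry. -/
def IsStandardTab (k n : ℕ) (T : Tab k) : Prop :=
  (∀ c ∈ T, Col.HeightsValid k c) ∧
  (Tab.entries T).Perm (List.range' 1 n) ∧
  List.Chain' (fun a b => b < a) (Tab.bottoms T) ∧
  (∀ c ∈ T, ∀ ht hb vt vb, c = Col.double ht hb vt vb → vt < vb)

/-- Updating a (partial) path tableau along one cover step `z ⋖ w` of `Z(k)`, placing the
value `i` in the `k` new squares of `w` relative to `z`:  if `w` is obtained from `z` by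
inserting a letter `1_j` after the prefix of `2`'s, a new height-1 column with a single
ribbon of height `j` filled with `i` is created there; if `w` is obtained from `z` by
changing the letter `1_h` just after the prefix of `2`'s into a `2`, the `k` new squares
of that column form a `k`-ribbon of height `k + 1 - h` filled with `i`, stacked on top of
the already present `k`-ribbon of height `h`. -/
def updateTab (k : ℕ) (i : ℕ) : Word k → Word k → Tab k → Tab k
  | Letter.two :: z', Letter.two :: w', c :: T => c :: updateTab k i z' w' T
  | Letter.one h :: _, Letter.two :: _, Col.single _ v :: T =>
      Col.double (k + 1 - h) h i v :: T
  | z, Letter.one j :: w', T => if z = w' then Col.single j i :: T else T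
  | _, _, T => T

/-- The `k`-ribbon Fibonacci path tableau determined by a saturated chain in `Z(k)`:
for each `i = 1, …, n` the value `i` is placed in the `k` new squares of `c i` relative
to `c (i-1)`. -/
def chainTab (k : ℕ) (c : ℕ → Word k) : ℕ → Tab k
  | 0 => []
  | m + 1 => updateTab k (m + 1) (c m) (c (m + 1)) (chainTab k c m)

/-- `T` is a `k`-ribbon Fibonacci path tableau with entries `1, …, n`: it is obtained
from some saturated chain `∅ = c 0 ⋖ c 1 ⋖ ⋯ ⋖ c n` in `Z(k)` by placing `i`'s in the
`k` new squares created at the `i`-th step. -/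
def IsPathTab (k n : ℕ) (T : Tab k) : Prop :=
  ∃ c : ℕ → Word k, IsZChain k n c ∧ T = chainTab k c n

end KRF
namespace KRF

/-- A `k`-colored permutation of length `n`: a permutation `x_1 x_2 ⋯ x_n` of `{1, …, n}`
(here `x_i = perm i + 1`, using `Fin n` positions and values) together with a color
`color i ∈ {1, …, k}` attached to each entry. -/
structure ColoredPerm (n k : ℕ) : Type where
  perm : Equiv.Perm (Fin n)
  color : Fin n → ℕ
  color_pos : ∀ i, 1 ≤ color i
  color_le : ∀ i, color i ≤ k

/-- Insertion of a value `x` of color `j` into a `k`-ribbon Fibonacci tableau: compare `x`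
with the value `t` in the `k`-ribbon containing the leftmost square of the bottom row.
If the tableau is empty or `x > t`, a new leftmost height-1 column consisting of a single
`k`-ribbon of height `j` filled with `x` is created.  If `x < t`, a `k`-ribbon of height
`j` filled with `x` is placed on top of the `k`-ribbon containing `t` (which is forced to
become a `k`-ribbon of height `k + 1 - j`); if a `k`-ribbon of height `l` filled with `b`
was already on top of the ribbon containing `t`, it is bumped out and the value `b` with
color `l` is inserted recursively into the tableau formed by the columns to the right. -/
def insertVal (k : ℕ) (x j : ℕ) : Tab k → Tab k
  | [] => [Col.single j x]
  | c :: rest =>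
    if Col.bottomVal c < x then Col.single j x :: c :: rest
    else
      match c with
      | Col.single _ v => Col.double j (k + 1 - j) x v :: rest
      | Col.double ht _ vt vb => Col.double j (k + 1 - j) x vb :: insertVal k vt ht rest

/-- The insertion tableau obtained after inserting the first `i` colored entries
`x_1^{j_1}, …, x_i^{j_i}` of the `k`-colored permutation `π` into the empty tableau. -/
def PPartial (k n : ℕ) (π : ColoredPerm n k) (i : ℕ) : Tab k :=
  ((List.finRange n).take i).foldl
    (fun T m => insertVal k ((π.perm m : ℕ) + 1) (π.color m) T) []

/-- The insertion tableau `P(π)` of a `k`-colored permutation. -/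
def PTab (k n : ℕ) (π : ColoredPerm n k) : Tab k := PPartial k n π n

/-- The chain of shapes of the partial insertion tableaux of `π`. -/
def QChain (k n : ℕ) (π : ColoredPerm n k) (i : ℕ) : Word k :=
  Tab.shape (PPartial k n π i)

/-- The recording tableau `Q(π)`: it has the same shape as `P(π)`, and after the `i`-th
insertion the value `i` is placed in the `k` squares by which the shape grew at step `i`. -/
def QTab (k n : ℕ) (π : ColoredPerm n k) : Tab k := chainTab k (QChain k n π) n

end KRF
namespace KRF

/-- Fomin's local growth rule: given the labels `ν` (bottom-left), `μ₁` (top-left),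
`μ₂` (bottom-right) of a unit square and the `X` of the square (`some j` if the square
contains an `X^j`, `none` otherwise), it computes the top-right label `λ`:
(1) if exactly one of `μ₁, μ₂` covers `ν` and the other equals `ν`, then `λ` is the
covering one; (2) if both cover `ν` then `λ = 2ν`; (3) if `μ₁ = ν = μ₂` and the square
contains an `X^j` then `λ = 1_j ν`; (4) if `μ₁ = ν = μ₂` and there is no `X`, `λ = ν`. -/
def growthRule (k : ℕ) (ν μ₁ μ₂ : Word k) (x : Option ℕ) : Word k :=
  if μ₁ = ν ∧ μ₂ = ν then
    match x with
    | some j => Letter.one j :: ν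
    | none => ν
  else if μ₁ = ν then μ₂
  else if μ₂ = ν then μ₁
  else Letter.two :: ν

/-- The content of the unit square in column `c+1` and row `r+1` (1-indexed) of the square
diagram of `π`: `some j` if it contains an `X^j` (i.e. `π` sends position `c+1` to value
`r+1`, colored `j`), and `none` otherwise. -/
def squareX (k n : ℕ) (π : ColoredPerm n k) (c r : ℕ) : Option ℕ :=
  if h : c < n ∧ r < n then
    if (π.perm ⟨c, h.1⟩ : ℕ) = r then some (π.color ⟨c, h.1⟩) else none
  else none

/-- The labels of the corners of the square diagram of `π` produced by Fomin's growth
rules: every corner on the left and bottom edges is labeled by the empty word, and the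
top-right corner of each unit square is computed by the local growth rule. -/
def growth (k n : ℕ) (π : ColoredPerm n k) : ℕ → ℕ → Word k
  | 0, _ => []
  | _ + 1, 0 => []
  | c + 1, r + 1 =>
      growthRule k (growth k n π c r) (growth k n π c (r + 1)) (growth k n π (c + 1) r)
        (squareX k n π c r)
termination_by c r => (c, r)

/-- The saturated chain read bottom-to-top up the right edge of the growth diagram. -/
def PhatChain (k n : ℕ) (π : ColoredPerm n k) (r : ℕ) : Word k := growth k n π n r

/-- The saturated chain read left-to-right along the top edge of the growth diagram. -/
def QhatChain (k n : ℕ) (π : ColoredPerm n k) (c : ℕ) : Word k := growth k n π c n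

/-- The `k`-ribbon Fibonacci path tableau `P̂(π)` obtained from the right edge of the
growth diagram of `π`. -/
def PhatTab (k n : ℕ) (π : ColoredPerm n k) : Tab k := chainTab k (PhatChain k n π) n

/-- The `k`-ribbon Fibonacci path tableau `Q̂(π)` obtained from the top edge of the
growth diagram of `π`. -/
def QhatTab (k n : ℕ) (π : ColoredPerm n k) : Tab k := chainTab k (QhatChain k n π) n

end KRF
namespace KRF

-- ### development
def Stp (k : ℕ) (z w : Word k) : Prop := z = w ∨ ZCovers k z w

lemma Stp.refl {k : ℕ} (z : Word k) : Stp k z z := Or.inl rfl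

lemma rank_append {k : ℕ} (p s : Word k) : Word.rank (p ++ s) = Word.rank p + Word.rank s := by
  simp [Word.rank]

lemma rank_cons {k : ℕ} (l : Letter k) (s : Word k) :
    Word.rank (l :: s) = l.rank + Word.rank s := by
  simp [Word.rank]

lemma rank_cover {k : ℕ} {z w : Word k} (h : ZCovers k z w) : z.rank + 1 = w.rank := by
  rcases h with ⟨p, s, j, _, _, _, hw, hz⟩ | ⟨p, s, j, _, _, _, hw, hz⟩ <;>
    subst hw hz <;> simp [rank_append, rank_cons, Letter.rank] <;> ring

lemma cover_ne {k : ℕ} {z w : Word k} (h : ZCovers k z w) : z ≠ w := by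
  intro he; subst he; have := rank_cover h; omega

lemma cover_ne_nil {k : ℕ} {z : Word k} (h : ZCovers k z []) : False := by
  rcases h with ⟨p, s, j, _, _, _, hw, _⟩ | ⟨p, s, j, _, _, _, hw, _⟩ <;>
    exact (List.append_ne_nil_of_right_ne_nil p (List.cons_ne_nil _ _) hw.symm)

lemma rank_eq_zero {k : ℕ} {w : Word k} (h : Word.rank w = 0) : w = [] := by
  cases w with
  | nil => rfl
  | cons l t =>
    rw [rank_cons] at h
    cases l <;> simp [Letter.rank] at h

lemma all2_shift {k : ℕ} {p : Word k} (hp : ∀ l ∈ p, l = Letter.two) (s : Word k) :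
    p ++ Letter.two :: s = Letter.two :: (p ++ s) := by
  induction p with
  | nil => rfl
  | cons l p' ih =>
    have hl : l = Letter.two := hp l (by simp)
    subst hl
    simp only [List.cons_append, List.cons.injEq, true_and]
    exact ih (fun l hl => hp l (by simp [hl]))

lemma cover_cons_one {k j : ℕ} (h1 : 1 ≤ j) (h2 : j ≤ k) (t : Word k) :
    ZCovers k t (Letter.one j :: t) :=
  Or.inr ⟨[], t, j, by simp, h1, h2, by simp, by simp⟩

lemma cover_down_one {k j : ℕ} {z t : Word k} (h : ZCovers k z (Letter.one j :: t)) :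
    z = t ∧ 1 ≤ j ∧ j ≤ k := by
  rcases h with ⟨p, s, j', hp, hj1, hj2, hw, hz⟩ | ⟨p, s, j', hp, hj1, hj2, hw, hz⟩
  · exfalso
    cases p with
    | nil => simp at hw
    | cons l p' =>
      have : l = Letter.two := hp l (by simp)
      subst this; simp at hw
  · cases p with
    | nil =>
      simp only [List.nil_append, List.cons.injEq] at hw
      obtain ⟨h1, h2⟩ := hw
      cases h1
      subst h2
      exact ⟨by simpa using hz, hj1, hj2⟩
    | cons l p' =>
      exfalso
      have : l = Letter.two := hp l (by simp)
      subst this; simp at hw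

lemma cover_down_two {k : ℕ} {z t : Word k} (h : ZCovers k z (Letter.two :: t)) :
    ZCovers k t z := by
  rcases h with ⟨p, s, j, hp, hj1, hj2, hw, hz⟩ | ⟨p, s, j, hp, hj1, hj2, hw, hz⟩
  · cases p with
    | nil =>
      obtain rfl : t = s := by simpa using hw
      subst hz
      simpa using cover_cons_one hj1 hj2 t
    | cons l p' =>
      have hl : l = Letter.two := hp l (by simp)
      subst hl
      have hp' : ∀ l ∈ p', l = Letter.two := fun l hl => hp l (by simp [hl])
      simp only [List.cons_append, List.cons.injEq, true_and] at hw
      subst hw hz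
      refine Or.inr ⟨Letter.two :: p', s, j, by simpa using hp', hj1, hj2, rfl, ?_⟩
      simp [all2_shift hp']
  · cases p with
    | nil => simp at hw
    | cons l p' =>
      have hl : l = Letter.two := hp l (by simp)
      subst hl
      have hp' : ∀ l ∈ p', l = Letter.two := fun l hl => hp l (by simp [hl])
      simp only [List.cons_append, List.cons.injEq, true_and] at hw
      subst hw hz
      refine Or.inl ⟨p', s, j, hp', hj1, hj2, ?_, rfl⟩
      simp [all2_shift hp']

lemma cover_up_two {k : ℕ} {ν μ : Word k} (h : ZCovers k ν μ) :
    ZCovers k μ (Letter.two :: ν) := by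
  rcases h with ⟨p, s, j, hp, hj1, hj2, hw, hz⟩ | ⟨p, s, j, hp, hj1, hj2, hw, hz⟩
  · subst hw hz
    refine Or.inr ⟨Letter.two :: p, s, j, ?_, hj1, hj2, by simp, ?_⟩
    · intro l hl; rcases List.mem_cons.1 hl with h | h
      · exact h
      · exact hp l h
    · simp [all2_shift hp]
  · subst hw hz
    refine Or.inl ⟨p, s, j, hp, hj1, hj2, ?_, rfl⟩
    simp [all2_shift hp]

lemma chain_rank {k n : ℕ} {c : ℕ → Word k} (hc : IsZChain k n c) :
    ∀ i, i ≤ n → (c i).rank = i := by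
  intro i
  induction i with
  | zero => intro _; simp [hc.1, Word.rank]
  | succ m ih =>
    intro hm
    have := rank_cover (hc.2 m (by omega))
    have := ih (by omega)
    omega


-- ### section 2
def xCount : Option ℕ → ℕ
  | some _ => 1
  | none => 0

def invRule (k : ℕ) (μ₁ μ₂ lam : Word k) : Word k × Option ℕ :=
  if μ₁ = lam then (μ₂, none)
  else if μ₂ = lam then (μ₁, none)
  else match lam with
    | Letter.one j :: t => (t, some j)
    | Letter.two :: t => (t, none)
    | [] => ([], none)

lemma growthRule_symm (k : ℕ) (ν μ₁ μ₂ : Word k) (x : Option ℕ) :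
    growthRule k ν μ₂ μ₁ x = growthRule k ν μ₁ μ₂ x := by
  unfold growthRule
  by_cases h1 : μ₁ = ν <;> by_cases h2 : μ₂ = ν <;> simp [h1, h2]

lemma growthRule_right_eq (k : ℕ) (ν μ₁ : Word k) :
    growthRule k ν μ₁ ν none = μ₁ := by
  unfold growthRule
  by_cases h1 : μ₁ = ν <;> simp [h1]

lemma growthRule_top_eq (k : ℕ) (ν μ₂ : Word k) :
    growthRule k ν ν μ₂ none = μ₂ := by
  unfold growthRule
  by_cases h2 : μ₂ = ν <;> simp [h2]

lemma rank_two_cons {k : ℕ} (ν : Word k) :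
    Word.rank (Letter.two :: ν) = Word.rank ν + 2 := by
  simp [Word.rank, Letter.rank]; ring

lemma rank_one_cons {k j : ℕ} (ν : Word k) :
    Word.rank (Letter.one j :: ν) = Word.rank ν + 1 := by
  simp [Word.rank, Letter.rank]; ring

lemma rule_forward {k : ℕ} {ν μ₁ μ₂ : Word k} {x : Option ℕ}
    (h1 : Stp k ν μ₁) (h2 : Stp k ν μ₂)
    (hx : ∀ j, x = some j → 1 ≤ j ∧ j ≤ k ∧ μ₁ = ν ∧ μ₂ = ν) :
    Stp k μ₁ (growthRule k ν μ₁ μ₂ x) ∧ Stp k μ₂ (growthRule k ν μ₁ μ₂ x) ∧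
    invRule k μ₁ μ₂ (growthRule k ν μ₁ μ₂ x) = (ν, x) ∧
    Word.rank (growthRule k ν μ₁ μ₂ x) + Word.rank ν
      = Word.rank μ₁ + Word.rank μ₂ + xCount x := by
  by_cases e1 : μ₁ = ν
  · by_cases e2 : μ₂ = ν
    · cases x with
      | none =>
        have hg : growthRule k ν μ₁ μ₂ none = ν := by simp [growthRule, e1, e2]
        rw [hg]
        refine ⟨Or.inl e1, Or.inl e2, ?_, by rw [e1, e2]; simp only [xCount]; omega⟩
        simp [invRule, e1, e2]
      | some j =>
        obtain ⟨hj1, hj2, -, -⟩ := hx j rfl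
        have hg : growthRule k ν μ₁ μ₂ (some j) = Letter.one j :: ν := by
          simp [growthRule, e1, e2]
        rw [hg]
        have hcov := cover_cons_one (k := k) hj1 hj2 ν
        have hne1 : μ₁ ≠ Letter.one j :: ν := by
          rw [e1]; intro h; exact (List.cons_ne_self _ _) h.symm
        have hne2 : μ₂ ≠ Letter.one j :: ν := by
          rw [e2]; intro h; exact (List.cons_ne_self _ _) h.symm
        refine ⟨Or.inr (e1 ▸ hcov), Or.inr (e2 ▸ hcov), ?_, ?_⟩
        · simp [invRule, hne1, hne2, e1]
        · rw [rank_one_cons, e1, e2]; simp only [xCount]; omega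
    · have hcov : ZCovers k ν μ₂ := h2.resolve_left (fun h => e2 h.symm)
      have hxn : x = none := by
        cases x with
        | none => rfl
        | some j => exact absurd (hx j rfl).2.2.2 e2
      subst hxn
      have hg : growthRule k ν μ₁ μ₂ none = μ₂ := by rw [e1, growthRule_top_eq]
      rw [hg]
      refine ⟨e1 ▸ Or.inr hcov, Or.inl rfl, ?_, by rw [e1]; simp only [xCount]; omega⟩
      have hne1 : μ₁ ≠ μ₂ := by rw [e1]; exact fun h => e2 h.symm
      simp only [invRule, if_neg hne1, if_pos rfl]
      rw [e1]; simp
  · have hcov1 : ZCovers k ν μ₁ := h1.resolve_left (fun h => e1 h.symm)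
    have hxn : x = none := by
      cases x with
      | none => rfl
      | some j => exact absurd (hx j rfl).2.2.1 e1
    subst hxn
    by_cases e2 : μ₂ = ν
    · have hg : growthRule k ν μ₁ μ₂ none = μ₁ := by rw [e2, growthRule_right_eq]
      rw [hg]
      refine ⟨Or.inl rfl, e2 ▸ Or.inr hcov1, ?_, by rw [e2]; simp only [xCount]; omega⟩
      have hne2 : μ₂ ≠ μ₁ := by rw [e2]; exact fun h => e1 h.symm
      by_cases hq : μ₁ = μ₁
      · simp only [invRule, if_pos rfl]
        rw [e2]; simp
      · exact absurd rfl hq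
    · have hcov2 : ZCovers k ν μ₂ := h2.resolve_left (fun h => e2 h.symm)
      have hg : growthRule k ν μ₁ μ₂ none = Letter.two :: ν := by
        simp [growthRule, e1, e2]
      rw [hg]
      have hr1 := rank_cover hcov1
      have hr2 := rank_cover hcov2
      have hrl := rank_two_cons (k := k) ν
      have hne1 : μ₁ ≠ Letter.two :: ν := by
        intro h; rw [h] at hr1; omega
      have hne2 : μ₂ ≠ Letter.two :: ν := by
        intro h; rw [h] at hr2; omega
      refine ⟨Or.inr (cover_up_two hcov1), Or.inr (cover_up_two hcov2), ?_, by simp only [xCount]; omega⟩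
      simp [invRule, hne1, hne2]

lemma rule_reverse {k : ℕ} {μ₁ μ₂ lam : Word k}
    (h1 : Stp k μ₁ lam) (h2 : Stp k μ₂ lam) :
    Stp k (invRule k μ₁ μ₂ lam).1 μ₁ ∧ Stp k (invRule k μ₁ μ₂ lam).1 μ₂ ∧
    (∀ j, (invRule k μ₁ μ₂ lam).2 = some j →
        1 ≤ j ∧ j ≤ k ∧ μ₁ = (invRule k μ₁ μ₂ lam).1 ∧ μ₂ = (invRule k μ₁ μ₂ lam).1) ∧
    growthRule k (invRule k μ₁ μ₂ lam).1 μ₁ μ₂ (invRule k μ₁ μ₂ lam).2 = lam := by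
  by_cases e1 : μ₁ = lam
  · have hinv : invRule k μ₁ μ₂ lam = (μ₂, none) := by simp [invRule, e1]
    rw [hinv]
    refine ⟨?_, Or.inl rfl, by simp, ?_⟩
    · rcases h2 with h | h
      · exact Or.inl (h.trans e1.symm)
      · exact Or.inr (by rw [e1]; exact h)
    · rw [growthRule_right_eq]; exact e1
  · by_cases e2 : μ₂ = lam
    · have hinv : invRule k μ₁ μ₂ lam = (μ₁, none) := by simp [invRule, e1, e2]
      rw [hinv]
      have hcov : ZCovers k μ₁ lam := h1.resolve_left e1
      refine ⟨Or.inl rfl, Or.inr (e2 ▸ hcov), by simp, ?_⟩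
      rw [growthRule_top_eq]; exact e2
    · have hcov1 : ZCovers k μ₁ lam := h1.resolve_left e1
      have hcov2 : ZCovers k μ₂ lam := h2.resolve_left e2
      cases lam with
      | nil => exact absurd hcov1 (fun h => cover_ne_nil h)
      | cons l t =>
        cases l with
        | one j =>
          obtain ⟨hz1, hj1, hj2⟩ := cover_down_one hcov1
          obtain ⟨hz2, -, -⟩ := cover_down_one hcov2
          have hinv : invRule k μ₁ μ₂ (Letter.one j :: t) = (t, some j) := by
            simp [invRule, e1, e2]
          rw [hinv]
          refine ⟨Or.inl hz1.symm, Or.inl hz2.symm, fun j' hj' => ?_, ?_⟩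
          · obtain rfl : j' = j := by simpa using hj'.symm
            exact ⟨hj1, hj2, hz1, hz2⟩
          · simp [growthRule, hz1, hz2]
        | two =>
          have hinv : invRule k μ₁ μ₂ (Letter.two :: t) = (t, none) := by
            simp [invRule, e1, e2]
          rw [hinv]
          have hc1 := cover_down_two hcov1
          have hc2 := cover_down_two hcov2
          have hn1 : μ₁ ≠ t := by
            intro h; subst h; have := rank_cover hc1; omega
          have hn2 : μ₂ ≠ t := by
            intro h; subst h; have := rank_cover hc2; omega
          refine ⟨Or.inr hc1, Or.inr hc2, by simp, ?_⟩
          simp [growthRule, hn1, hn2]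

-- ### section 3
def colRestrict {k : ℕ} (i : ℕ) : Col k → Option (Col k)
  | .single h v => if v ≤ i then some (.single h v) else none
  | .double ht hb vt vb =>
      if vt ≤ i then some (.double ht hb vt vb)
      else if vb ≤ i then some (.single hb vb) else none

def restrictTab {k : ℕ} (i : ℕ) (T : Tab k) : Tab k := T.filterMap (colRestrict i)

lemma shape_cons {k : ℕ} (c : Col k) (T : Tab k) :
    Tab.shape (c :: T) = c.shape :: Tab.shape T := rfl

lemma shape_eq_one {k h : ℕ} {c : Col k} (hc : c.shape = Letter.one h) :
    ∃ v, c = Col.single h v := by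
  cases c with
  | single h' v =>
    simp [Col.shape] at hc
    exact ⟨v, by rw [hc]⟩
  | double => simp [Col.shape] at hc

lemma updateTab_struct1 {k : ℕ} (i h : ℕ) :
    ∀ (p : Word k), (∀ l ∈ p, l = Letter.two) → ∀ (s : Word k) (T : Tab k),
    Tab.shape T = p ++ Letter.one h :: s →
    ∃ (P S : Tab k) (v : ℕ), T = P ++ Col.single h v :: S ∧
      Tab.shape P = p ∧ Tab.shape S = s ∧
      updateTab k i (p ++ Letter.one h :: s) (p ++ Letter.two :: s) T
        = P ++ Col.double (k + 1 - h) h i v :: S := by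
  intro p
  induction p with
  | nil =>
    intro _ s T hT
    cases T with
    | nil => simp [Tab.shape] at hT
    | cons c T' =>
      rw [List.nil_append] at hT
      rw [shape_cons] at hT
      obtain ⟨h1, h2⟩ := List.cons.injEq _ _ _ _ ▸ hT
      obtain ⟨v, rfl⟩ := shape_eq_one h1
      refine ⟨[], T', v, by simp, rfl, h2, ?_⟩
      simp [updateTab]
  | cons l p' ih =>
    intro hp s T hT
    have hl : l = Letter.two := hp l (by simp)
    subst hl
    have hp' : ∀ l ∈ p', l = Letter.two := fun l hl => hp l (by simp [hl])
    cases T with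
    | nil => simp [Tab.shape] at hT
    | cons c T' =>
      rw [List.cons_append, shape_cons] at hT
      obtain ⟨h1, h2⟩ := List.cons.injEq _ _ _ _ ▸ hT
      obtain ⟨P', S, v, hT', hP', hS, hup⟩ := ih hp' s T' h2
      refine ⟨c :: P', S, v, by simp [hT'], by simp [shape_cons, hP', h1], hS, ?_⟩
      cases c with
      | single h' v' =>
        exfalso; simp [Col.shape] at h1
      | double a b vt vb =>
        simp only [List.cons_append]
        rw [show updateTab k i (Letter.two :: (p' ++ Letter.one h :: s))
              (Letter.two :: (p' ++ Letter.two :: s)) (Col.double a b vt vb :: T')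
            = Col.double a b vt vb :: updateTab k i (p' ++ Letter.one h :: s)
              (p' ++ Letter.two :: s) T' from rfl]
        rw [hup]

lemma updateTab_struct2 {k : ℕ} (i j : ℕ) :
    ∀ (p : Word k), (∀ l ∈ p, l = Letter.two) → ∀ (s : Word k) (T : Tab k),
    Tab.shape T = p ++ s →
    ∃ (P S : Tab k), T = P ++ S ∧ Tab.shape P = p ∧ Tab.shape S = s ∧
      updateTab k i (p ++ s) (p ++ Letter.one j :: s) T = P ++ Col.single j i :: S := by
  intro p
  induction p with
  | nil =>
    intro _ s T hT
    refine ⟨[], T, by simp, rfl, by simpa using hT, ?_⟩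
    cases T with
    | nil =>
      simp only [List.nil_append]
      have : s = [] := by simpa [Tab.shape] using hT.symm
      subst this
      simp [updateTab]
    | cons c T' =>
      simp only [List.nil_append] at *
      cases s with
      | nil => simp [Tab.shape] at hT
      | cons l s' =>
        cases l with
        | one h' => simp [updateTab]
        | two =>
          cases c with
          | single h' v' =>
            exfalso
            rw [shape_cons] at hT
            obtain ⟨h1, -⟩ := List.cons.injEq _ _ _ _ ▸ hT
            simp [Col.shape] at h1
          | double a b vt vb => simp [updateTab]
  | cons l p' ih =>
    intro hp s T hT
    have hl : l = Letter.two := hp l (by simp)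
    subst hl
    have hp' : ∀ l ∈ p', l = Letter.two := fun l hl => hp l (by simp [hl])
    cases T with
    | nil => simp [Tab.shape] at hT
    | cons c T' =>
      rw [List.cons_append, shape_cons] at hT
      obtain ⟨h1, h2⟩ := List.cons.injEq _ _ _ _ ▸ hT
      obtain ⟨P', S, hT', hP', hS, hup⟩ := ih hp' s T' h2
      refine ⟨c :: P', S, by simp [hT'], by simp [shape_cons, hP', h1], hS, ?_⟩
      simp only [List.cons_append]
      rw [show updateTab k i (Letter.two :: (p' ++ s))
            (Letter.two :: (p' ++ Letter.one j :: s)) (c :: T')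
          = c :: updateTab k i (p' ++ s) (p' ++ Letter.one j :: s) T' from ?_]
      · rw [hup]
      · cases c <;> rfl

lemma shape_updateTab {k i : ℕ} {z w : Word k} {T : Tab k}
    (hc : ZCovers k z w) (hT : Tab.shape T = z) :
    Tab.shape (updateTab k i z w T) = w := by
  rcases hc with ⟨p, s, j, hp, hj1, hj2, hw, hz⟩ | ⟨p, s, j, hp, hj1, hj2, hw, hz⟩
  · subst hw hz
    obtain ⟨P, S, v, -, hP, hS, hup⟩ := updateTab_struct1 i j p hp s T hT
    rw [hup]
    simp only [Tab.shape] at hP hS ⊢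
    simp only [List.map_append, List.map_cons, Col.shape, hP, hS]
  · subst hw hz
    obtain ⟨P, S, -, hP, hS, hup⟩ := updateTab_struct2 i j p hp s T hT
    rw [hup]
    simp only [Tab.shape] at hP hS ⊢
    simp only [List.map_append, List.map_cons, Col.shape, hP, hS]

lemma shape_chainTab {k n : ℕ} {c : ℕ → Word k} (hc : IsZChain k n c) :
    ∀ m, m ≤ n → Tab.shape (chainTab k c m) = c m := by
  intro m
  induction m with
  | zero => intro _; simp [chainTab, Tab.shape, hc.1]
  | succ m ih =>
    intro hm
    show Tab.shape (updateTab k (m+1) (c m) (c (m+1)) (chainTab k c m)) = c (m+1)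
    exact shape_updateTab (hc.2 m (by omega)) (ih (by omega))

lemma entries_append {k : ℕ} (P S : Tab k) :
    Tab.entries (P ++ S) = Tab.entries P ++ Tab.entries S := by
  simp [Tab.entries]

lemma entries_cons {k : ℕ} (c : Col k) (T : Tab k) :
    Tab.entries (c :: T) = (match c with
      | Col.single _ v => [v]
      | Col.double _ _ vt vb => [vt, vb]) ++ Tab.entries T := by
  simp [Tab.entries]

lemma entries_updateTab {k i : ℕ} {z w : Word k} {T : Tab k}
    (hc : ZCovers k z w) (hT : Tab.shape T = z) :
    ∀ v ∈ Tab.entries (updateTab k i z w T), v = i ∨ v ∈ Tab.entries T := by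
  rcases hc with ⟨p, s, j, hp, hj1, hj2, hw, hz⟩ | ⟨p, s, j, hp, hj1, hj2, hw, hz⟩
  · subst hw hz
    obtain ⟨P, S, v, hTeq, hP, hS, hup⟩ := updateTab_struct1 i j p hp s T hT
    rw [hup, hTeq]
    intro u hu
    simp [entries_append, entries_cons] at hu ⊢
    tauto
  · subst hw hz
    obtain ⟨P, S, hTeq, hP, hS, hup⟩ := updateTab_struct2 i j p hp s T hT
    rw [hup, hTeq]
    intro u hu
    simp [entries_append, entries_cons] at hu ⊢
    tauto

lemma entries_chainTab_le {k n : ℕ} {c : ℕ → Word k} (hc : IsZChain k n c) :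
    ∀ m, m ≤ n → ∀ v ∈ Tab.entries (chainTab k c m), v ≤ m := by
  intro m
  induction m with
  | zero => intro _ v hv; simp [chainTab, Tab.entries] at hv
  | succ m ih =>
    intro hm v hv
    have := entries_updateTab (hc.2 m (by omega)) (shape_chainTab hc m (by omega)) v hv
    rcases this with h | h
    · omega
    · have := ih (by omega) v h; omega

lemma restrict_fix {k i : ℕ} {T : Tab k} (h : ∀ v ∈ Tab.entries T, v ≤ i) :
    restrictTab i T = T := by
  induction T with
  | nil => rfl
  | cons c T' ih =>
    have hT' : ∀ v ∈ Tab.entries T', v ≤ i := by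
      intro v hv; exact h v (by rw [entries_cons]; simp [hv])
    have hfix : colRestrict i c = some c := by
      cases c with
      | single hh v =>
        have : v ≤ i := h v (by rw [entries_cons]; simp)
        simp [colRestrict, this]
      | double a b vt vb =>
        have : vt ≤ i := h vt (by rw [entries_cons]; simp)
        simp [colRestrict, this]
    show List.filterMap _ (c :: T') = c :: T'
    rw [List.filterMap_cons, hfix]
    rw [show List.filterMap (colRestrict i) T' = restrictTab i T' from rfl, ih hT']

lemma restrict_append {k i : ℕ} (P S : Tab k) :
    restrictTab i (P ++ S) = restrictTab i P ++ restrictTab i S := by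
  simp [restrictTab]

lemma restrict_updateTab {k : ℕ} {m i : ℕ} {z w : Word k} {T : Tab k}
    (hc : ZCovers k z w) (hT : Tab.shape T = z) (him : i < m) :
    restrictTab i (updateTab k m z w T) = restrictTab i T := by
  rcases hc with ⟨p, s, j, hp, hj1, hj2, hw, hz⟩ | ⟨p, s, j, hp, hj1, hj2, hw, hz⟩
  · subst hw hz
    obtain ⟨P, S, v, hTeq, hP, hS, hup⟩ := updateTab_struct1 m j p hp s T hT
    rw [hup, hTeq, restrict_append, restrict_append]
    congr 1
    show List.filterMap _ _ = List.filterMap _ _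
    rw [List.filterMap_cons, List.filterMap_cons]
    have h1 : colRestrict (k := k) i (Col.double (k + 1 - j) j m v) = colRestrict (k := k) i (Col.single j v) := by
      simp [colRestrict, show ¬ (m ≤ i) by omega]
    rw [h1]
  · subst hw hz
    obtain ⟨P, S, hTeq, hP, hS, hup⟩ := updateTab_struct2 m j p hp s T hT
    rw [hup, hTeq, restrict_append, restrict_append]
    congr 1
    show List.filterMap _ _ = List.filterMap _ _
    rw [List.filterMap_cons]
    have h1 : colRestrict (k := k) i (Col.single j m) = none := by
      simp [colRestrict, show ¬ (m ≤ i) by omega]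
    rw [h1]

lemma restrict_chainTab {k n : ℕ} {c : ℕ → Word k} (hc : IsZChain k n c) :
    ∀ m, m ≤ n → ∀ i, i ≤ m → restrictTab i (chainTab k c m) = chainTab k c i := by
  intro m
  induction m with
  | zero =>
    intro _ i hi
    obtain rfl : i = 0 := by omega
    rfl
  | succ m ih =>
    intro hm i hi
    by_cases he : i = m + 1
    · subst he
      exact restrict_fix (entries_chainTab_le hc (m+1) hm)
    · have h1 : restrictTab i (chainTab k c (m+1)) = restrictTab i (chainTab k c m) :=
        restrict_updateTab (hc.2 m (by omega)) (shape_chainTab hc m (by omega)) (by omega)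
      rw [h1, ih (by omega) i (by omega)]

lemma chainTab_congr {k : ℕ} {c c' : ℕ → Word k} :
    ∀ m, (∀ i, i ≤ m → c i = c' i) → chainTab k c m = chainTab k c' m := by
  intro m
  induction m with
  | zero => intro _; rfl
  | succ m ih =>
    intro h
    show updateTab k (m+1) (c m) (c (m+1)) (chainTab k c m) = _
    rw [h m (by omega), h (m+1) (by omega), ih (fun i hi => h i (by omega))]
    rfl

lemma chain_eq_of_chainTab_eq {k n : ℕ} {c c' : ℕ → Word k}
    (hc : IsZChain k n c) (hc' : IsZChain k n c')
    (hT : chainTab k c n = chainTab k c' n) :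
    ∀ i, i ≤ n → c i = c' i := by
  intro i hi
  have h1 : c i = Tab.shape (chainTab k c i) := (shape_chainTab hc i hi).symm
  have h2 : c' i = Tab.shape (chainTab k c' i) := (shape_chainTab hc' i hi).symm
  rw [h1, h2, ← restrict_chainTab hc n le_rfl i hi, ← restrict_chainTab hc' n le_rfl i hi, hT]


-- ### section 4
lemma growth_succ (k n : ℕ) (π : ColoredPerm n k) (c r : ℕ) :
    growth k n π (c + 1) (r + 1) =
      growthRule k (growth k n π c r) (growth k n π c (r + 1)) (growth k n π (c + 1) r)
        (squareX k n π c r) := by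
  rw [growth]

lemma growth_left (k n : ℕ) (π : ColoredPerm n k) (r : ℕ) : growth k n π 0 r = [] := by
  rw [growth]

lemma growth_bot (k n : ℕ) (π : ColoredPerm n k) (c : ℕ) : growth k n π c 0 = [] := by
  cases c <;> rw [growth]

lemma squareX_eq_none_row {k n : ℕ} {π : ColoredPerm n k} {c r : ℕ}
    (h : ∀ hc : c < n, ∀ hr : r < n, π.perm ⟨c, hc⟩ ≠ (⟨r, hr⟩ : Fin n)) :
    squareX k n π c r = none := by
  unfold squareX
  split
  · next hcr =>
    rw [if_neg]
    intro he
    exact h hcr.1 hcr.2 (Fin.ext he)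
  · rfl

lemma squareX_some {k n : ℕ} {π : ColoredPerm n k} {c r j : ℕ}
    (h : squareX k n π c r = some j) :
    ∃ (hc : c < n) (hr : r < n), π.perm ⟨c, hc⟩ = (⟨r, hr⟩ : Fin n) ∧ j = π.color ⟨c, hc⟩ := by
  unfold squareX at h
  split at h
  · next hcr =>
    split at h
    · next he =>
      exact ⟨hcr.1, hcr.2, Fin.ext he, by simpa using h.symm⟩
    · exact absurd h (by simp)
  · exact absurd h (by simp)

lemma growth_col_const {k n : ℕ} {π : ColoredPerm n k} {c r : ℕ}
    (h : ∀ s, s < r → squareX k n π c s = none) :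
    ∀ s, s ≤ r → growth k n π (c + 1) s = growth k n π c s := by
  intro s
  induction s with
  | zero => intro _; rw [growth_bot, growth_bot]
  | succ s ih =>
    intro hs
    rw [growth_succ, ih (by omega), h s (by omega), growthRule_right_eq]

lemma growth_row_const {k n : ℕ} {π : ColoredPerm n k} {c r : ℕ}
    (h : ∀ t, t < c → squareX k n π t r = none) :
    ∀ t, t ≤ c → growth k n π t (r + 1) = growth k n π t r := by
  intro t
  induction t with
  | zero => intro _; rw [growth_left, growth_left]
  | succ t ih =>
    intro ht
    rw [growth_succ, ih (by omega), h t (by omega), growthRule_top_eq]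

lemma xcond {k n : ℕ} {π : ColoredPerm n k} {c r : ℕ} :
    ∀ j, squareX k n π c r = some j →
      1 ≤ j ∧ j ≤ k ∧ growth k n π c (r + 1) = growth k n π c r ∧
        growth k n π (c + 1) r = growth k n π c r := by
  intro j hj
  obtain ⟨hc, hr, hperm, hcol⟩ := squareX_some hj
  refine ⟨hcol ▸ π.color_pos _, hcol ▸ π.color_le _, ?_, ?_⟩
  · -- row const: no X in row r at columns < c
    refine growth_row_const (fun t ht => squareX_eq_none_row (fun htn hrn he => ?_)) c le_rfl
    have : (⟨t, htn⟩ : Fin n) = ⟨c, hc⟩ := π.perm.injective (he.trans (by rw [hperm]))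
    have := Fin.val_eq_val _ _ |>.2 this
    simp at this; omega
  · -- col const: no X in column c at rows < r
    refine growth_col_const (fun s hs => squareX_eq_none_row (fun hcn hsn he => ?_)) r le_rfl
    have h2 : (⟨r, hr⟩ : Fin n) = ⟨s, hsn⟩ := by rw [← hperm, ← he]
    have := congrArg Fin.val h2
    simp at this; omega

lemma growth_steps {k n : ℕ} (π : ColoredPerm n k) :
    ∀ c r, Stp k (growth k n π c r) (growth k n π c (r + 1)) ∧
      Stp k (growth k n π c r) (growth k n π (c + 1) r) := by
  intro c
  induction c with
  | zero =>
    have hV : ∀ r, Stp k (growth k n π 0 r) (growth k n π 0 (r + 1)) := by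
      intro r; rw [growth_left, growth_left]; exact Or.inl rfl
    intro r
    refine ⟨hV r, ?_⟩
    induction r with
    | zero => rw [growth_bot, growth_bot]; exact Or.inl rfl
    | succ r ihr =>
      have := (rule_forward (hV r) ihr (xcond (c := 0) (r := r))).1
      rw [← growth_succ] at this
      exact this
  | succ c ihc =>
    have hA : ∀ r, Stp k (growth k n π (c + 1) r) (growth k n π (c + 1) (r + 1)) := by
      intro r
      have := (rule_forward (ihc r).1 (ihc r).2 (xcond (c := c) (r := r))).2.1
      rw [← growth_succ] at this
      exact this
    intro r
    refine ⟨hA r, ?_⟩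
    induction r with
    | zero => rw [growth_bot, growth_bot]; exact Or.inl rfl
    | succ r ihr =>
      have := (rule_forward (hA r) ihr (xcond (c := c + 1) (r := r))).1
      rw [← growth_succ] at this
      exact this

lemma growth_invRule {k n : ℕ} (π : ColoredPerm n k) (c r : ℕ) :
    invRule k (growth k n π c (r + 1)) (growth k n π (c + 1) r) (growth k n π (c + 1) (r + 1))
      = (growth k n π c r, squareX k n π c r) := by
  rw [growth_succ]
  exact (rule_forward (growth_steps π c r).1 (growth_steps π c r).2 (xcond)).2.2.1

lemma right_edge_strict {k n : ℕ} (π : ColoredPerm n k) {r : ℕ} (hr : r < n) :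
    growth k n π n (r + 1) ≠ growth k n π n r := by
  obtain ⟨i, hin, hpi⟩ : ∃ i, ∃ h : i < n, π.perm ⟨i, h⟩ = ⟨r, hr⟩ :=
    ⟨(π.perm.symm ⟨r, hr⟩ : ℕ), (π.perm.symm ⟨r, hr⟩).2, π.perm.apply_symm_apply ⟨r, hr⟩⟩
  have hXi : squareX k n π i r = some (π.color ⟨i, hin⟩) := by
    unfold squareX
    rw [dif_pos ⟨hin, hr⟩, if_pos (congrArg Fin.val hpi)]
  have hbase : growth k n π (i + 1) (r + 1) ≠ growth k n π (i + 1) r := by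
    obtain ⟨hj1, hj2, hrow, hcol⟩ := xcond (π := π) (c := i) (r := r) _ hXi
    rw [growth_succ, hXi, hrow, hcol]
    have hgr : growthRule k (growth k n π i r) (growth k n π i r) (growth k n π i r)
        (some (π.color ⟨i, hin⟩)) = Letter.one (π.color ⟨i, hin⟩) :: growth k n π i r := by
      simp [growthRule]
    rw [hgr]
    exact List.cons_ne_self _ _
  -- propagate strictness to the right
  have hprop : ∀ c, i + 1 ≤ c → c ≤ n →
      growth k n π c (r + 1) ≠ growth k n π c r := by
    intro c
    induction c with
    | zero => omega
    | succ c ihc =>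
      intro hc1 hc2
      by_cases he : c = i
      · subst he; exact hbase
      · have hlt : i + 1 ≤ c := by omega
        have hne := ihc hlt (by omega)
        -- square (c, r), no X
        have hX : squareX k n π c r = none := by
          refine squareX_eq_none_row (fun hcn hrn hperm => ?_)
          have : (⟨c, hcn⟩ : Fin n) = ⟨i, hin⟩ := π.perm.injective (by rw [hperm, hpi])
          have := Fin.val_eq_val _ _ |>.2 this
          simp at this; omega
        rw [growth_succ, hX]
        set ν := growth k n π c r
        set μ₁ := growth k n π c (r + 1)
        set μ₂ := growth k n π (c + 1) r
        have hst2 : Stp k ν μ₂ := (growth_steps π c r).2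
        by_cases e2 : μ₂ = ν
        · have : growthRule k ν μ₁ μ₂ none = μ₁ := by rw [e2, growthRule_right_eq]
          rw [this, e2]; exact hne
        · have e1 : ¬ μ₁ = ν := hne
          have : growthRule k ν μ₁ μ₂ none = Letter.two :: ν := by
            simp [growthRule, e1, e2]
          rw [this]
          intro hcontra
          have hcov2 : ZCovers k ν μ₂ := hst2.resolve_left (fun h => e2 h.symm)
          have := rank_cover hcov2
          rw [← hcontra, rank_two_cons] at this
          omega
  exact hprop n (by omega) le_rfl

lemma Phat_isZChain {k n : ℕ} (π : ColoredPerm n k) : IsZChain k n (PhatChain k n π) := by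
  constructor
  · exact growth_bot k n π n
  · intro r hr
    have hst : Stp k (growth k n π n r) (growth k n π n (r + 1)) := (growth_steps π n r).1
    rcases hst with h | h
    · exact absurd h.symm (right_edge_strict π hr)
    · exact h

def invCP {n k : ℕ} (π : ColoredPerm n k) : ColoredPerm n k where
  perm := π.perm.symm
  color := fun i => π.color (π.perm.symm i)
  color_pos := fun i => π.color_pos _
  color_le := fun i => π.color_le _

lemma squareX_transpose {k n : ℕ} (π : ColoredPerm n k) (c r : ℕ) :
    squareX k n (invCP π) r c = squareX k n π c r := by
  unfold squareX invCP
  simp only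
  by_cases h : c < n ∧ r < n
  · rw [dif_pos ⟨h.2, h.1⟩, dif_pos h]
    by_cases he : (π.perm ⟨c, h.1⟩ : ℕ) = r
    · have he' : π.perm ⟨c, h.1⟩ = (⟨r, h.2⟩ : Fin n) := Fin.ext he
      have h1 : π.perm.symm ⟨r, h.2⟩ = ⟨c, h.1⟩ := by rw [← he']; simp
      rw [if_pos he, if_pos (by rw [h1]), h1]
    · rw [if_neg he, if_neg]
      intro hcontra
      have : π.perm.symm ⟨r, h.2⟩ = ⟨c, h.1⟩ := Fin.ext hcontra
      apply he
      rw [← this]; simp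
  · rw [dif_neg (fun hh => h ⟨hh.2, hh.1⟩), dif_neg h]

lemma growth_transpose {k n : ℕ} (π : ColoredPerm n k) :
    ∀ c r, growth k n (invCP π) r c = growth k n π c r := by
  intro c
  induction c with
  | zero => intro r; rw [growth_left, growth_bot]
  | succ c ihc =>
    intro r
    induction r with
    | zero => rw [growth_left, growth_bot]
    | succ r ihr =>
      rw [growth_succ, growth_succ, squareX_transpose, ihc r, ihc (r + 1), ihr,
        growthRule_symm]

-- ### section 5 : reverse construction
def gRev (k n : ℕ) (a b : ℕ → Word k) (c r : ℕ) : Word k :=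
  if hc : n ≤ c then a r
  else if hr : n ≤ r then b c
  else (invRule k (gRev k n a b c (r + 1)) (gRev k n a b (c + 1) r)
         (gRev k n a b (c + 1) (r + 1))).1
termination_by (n - c) + (n - r)
decreasing_by all_goals omega

def xRev (k n : ℕ) (a b : ℕ → Word k) (c r : ℕ) : Option ℕ :=
  (invRule k (gRev k n a b c (r + 1)) (gRev k n a b (c + 1) r)
    (gRev k n a b (c + 1) (r + 1))).2

lemma gRev_right {k n : ℕ} (a b : ℕ → Word k) {c : ℕ} (hc : n ≤ c) (r : ℕ) :
    gRev k n a b c r = a r := by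
  rw [gRev, dif_pos hc]

lemma gRev_top {k n : ℕ} (a b : ℕ → Word k) {c r : ℕ} (hc : c < n) (hr : n ≤ r) :
    gRev k n a b c r = b c := by
  rw [gRev, dif_neg (by omega), dif_pos hr]

lemma gRev_int {k n : ℕ} (a b : ℕ → Word k) {c r : ℕ} (hc : c < n) (hr : r < n) :
    gRev k n a b c r = (invRule k (gRev k n a b c (r + 1)) (gRev k n a b (c + 1) r)
      (gRev k n a b (c + 1) (r + 1))).1 := by
  conv_lhs => rw [gRev]
  rw [dif_neg (by omega), dif_neg (by omega)]

section Rev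
variable {k n : ℕ} {a b : ℕ → Word k}

lemma gRev_steps (ha : IsZChain k n a) (hb : IsZChain k n b) (hab : a n = b n) :
    ∀ d c r, c ≤ n → r ≤ n → (n - c) + (n - r) ≤ d →
      (r < n → Stp k (gRev k n a b c r) (gRev k n a b c (r + 1))) ∧
      (c < n → Stp k (gRev k n a b c r) (gRev k n a b (c + 1) r)) := by
  intro d
  induction d with
  | zero =>
    intro c r hc hr hm
    exact ⟨fun h => absurd h (by omega), fun h => absurd h (by omega)⟩
  | succ d ih =>
    intro c r hc hr hm
    by_cases hcn : c = n
    · refine ⟨fun hrn => ?_, fun h => absurd hcn (Nat.ne_of_lt h)⟩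
      rw [gRev_right a b (le_of_eq hcn.symm), gRev_right a b (le_of_eq hcn.symm)]
      exact Or.inr (ha.2 r hrn)
    · by_cases hrn : r = n
      · refine ⟨fun h => absurd hrn (Nat.ne_of_lt h), fun hcn' => ?_⟩
        rw [hrn]
        rw [gRev_top a b (by omega) le_rfl]
        by_cases he : c + 1 = n
        · rw [gRev_right a b (by omega), hab, ← he]
          exact Or.inr (hb.2 c (by omega))
        · rw [gRev_top a b (by omega) le_rfl]
          exact Or.inr (hb.2 c (by omega))
      · have hcn' : c < n := by omega
        have hrn' : r < n := by omega
        have h1 : Stp k (gRev k n a b c (r + 1)) (gRev k n a b (c + 1) (r + 1)) :=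
          (ih c (r + 1) (by omega) (by omega) (by omega)).2 hcn'
        have h2 : Stp k (gRev k n a b (c + 1) r) (gRev k n a b (c + 1) (r + 1)) :=
          (ih (c + 1) r (by omega) (by omega) (by omega)).1 hrn'
        have := rule_reverse h1 h2
        rw [← gRev_int a b hcn' hrn'] at this
        exact ⟨fun _ => this.1, fun _ => this.2.1⟩

lemma gRev_square (ha : IsZChain k n a) (hb : IsZChain k n b) (hab : a n = b n)
    {c r : ℕ} (hc : c < n) (hr : r < n) :
    Stp k (gRev k n a b c r) (gRev k n a b c (r + 1)) ∧
    Stp k (gRev k n a b c r) (gRev k n a b (c + 1) r) ∧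
    (∀ j, xRev k n a b c r = some j → 1 ≤ j ∧ j ≤ k ∧
      gRev k n a b c (r + 1) = gRev k n a b c r ∧ gRev k n a b (c + 1) r = gRev k n a b c r) ∧
    growthRule k (gRev k n a b c r) (gRev k n a b c (r + 1)) (gRev k n a b (c + 1) r)
      (xRev k n a b c r) = gRev k n a b (c + 1) (r + 1) := by
  have h1 : Stp k (gRev k n a b c (r + 1)) (gRev k n a b (c + 1) (r + 1)) :=
    (gRev_steps ha hb hab ((n - c) + (n - (r + 1))) c (r + 1) (by omega) (by omega) le_rfl).2 hc
  have h2 : Stp k (gRev k n a b (c + 1) r) (gRev k n a b (c + 1) (r + 1)) :=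
    (gRev_steps ha hb hab ((n - (c + 1)) + (n - r)) (c + 1) r (by omega) (by omega) le_rfl).1 hr
  have H := rule_reverse h1 h2
  rw [← gRev_int a b hc hr] at H
  have hx : (invRule k (gRev k n a b c (r + 1)) (gRev k n a b (c + 1) r)
      (gRev k n a b (c + 1) (r + 1))).2 = xRev k n a b c r := rfl
  rw [hx] at H
  exact ⟨H.1, H.2.1, fun j hj => ⟨(H.2.2.1 j hj).1, (H.2.2.1 j hj).2.1,
    (H.2.2.1 j hj).2.2.1, (H.2.2.1 j hj).2.2.2⟩, H.2.2.2⟩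

lemma gRev_rank_sq (ha : IsZChain k n a) (hb : IsZChain k n b) (hab : a n = b n)
    {c r : ℕ} (hc : c < n) (hr : r < n) :
    Word.rank (gRev k n a b (c + 1) (r + 1)) + Word.rank (gRev k n a b c r)
      = Word.rank (gRev k n a b c (r + 1)) + Word.rank (gRev k n a b (c + 1) r)
        + xCount (xRev k n a b c r) := by
  obtain ⟨hs1, hs2, hxc, hgr⟩ := gRev_square ha hb hab hc hr
  have := (rule_forward hs1 hs2 (fun j hj => (hxc j hj))).2.2.2
  rw [hgr] at this
  exact this

lemma Stp_rank_le {z w : Word k} (h : Stp k z w) : Word.rank z ≤ Word.rank w := by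
  rcases h with h | h
  · rw [h]
  · have := rank_cover h; omega

lemma gRev_bot (ha : IsZChain k n a) (hb : IsZChain k n b) (hab : a n = b n) :
    ∀ c, c ≤ n → gRev k n a b c 0 = [] := by
  suffices h : ∀ d c, c ≤ n → n - c ≤ d → Word.rank (gRev k n a b c 0) = 0 by
    intro c hc
    exact rank_eq_zero (h (n - c) c hc le_rfl)
  intro d
  induction d with
  | zero =>
    intro c hc hd
    rw [gRev_right a b (by omega : n ≤ c), ha.1]
    rfl
  | succ d ih =>
    intro c hc hd
    by_cases he : c = n
    · rw [gRev_right a b (by omega : n ≤ c), ha.1]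
      rfl
    · have h1 : Stp k (gRev k n a b c 0) (gRev k n a b (c + 1) 0) := by
        by_cases hn0 : 0 < n
        · exact (gRev_steps ha hb hab ((n - c) + n) c 0 (by omega) (by omega) (by omega)).2
            (by omega)
        · omega
      have := Stp_rank_le h1
      have := ih (c + 1) (by omega) (by omega)
      omega

lemma gRev_left_nil (ha : IsZChain k n a) (hb : IsZChain k n b) (hab : a n = b n) :
    ∀ r, r ≤ n → gRev k n a b 0 r = [] := by
  suffices h : ∀ d r, r ≤ n → n - r ≤ d → Word.rank (gRev k n a b 0 r) = 0 by
    intro r hr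
    exact rank_eq_zero (h (n - r) r hr le_rfl)
  have hcorner : ∀ r, r = n → Word.rank (gRev k n a b 0 r) = 0 := by
    intro r hrn
    by_cases hn0 : 0 < n
    · rw [gRev_top a b hn0 (by omega), hb.1]; rfl
    · rw [gRev_right a b (by omega), show r = 0 by omega, ha.1]; rfl
  intro d
  induction d with
  | zero =>
    intro r hr hd
    exact hcorner r (by omega)
  | succ d ih =>
    intro r hr hd
    by_cases he : r = n
    · exact hcorner r he
    · have h1 : Stp k (gRev k n a b 0 r) (gRev k n a b 0 (r + 1)) := by
        have hn0 : 0 < n := by omega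
        exact (gRev_steps ha hb hab (n + (n - r)) 0 r (by omega) (by omega) (by omega)).1
          (by omega)
      have := Stp_rank_le h1
      have := ih (r + 1) (by omega) (by omega)
      omega

lemma xCount_isSome (x : Option ℕ) : xCount x = if x.isSome then 1 else 0 := by
  cases x <;> rfl

lemma card_filter_range_succ (P : ℕ → Prop) [DecidablePred P] (r : ℕ) :
    ((Finset.range (r + 1)).filter P).card
      = ((Finset.range r).filter P).card + (if P r then 1 else 0) := by
  rw [Finset.range_add_one, Finset.filter_insert]
  split
  · rw [Finset.card_insert_of_notMem (fun h => absurd (Finset.mem_filter.1 h).1 (by simp))]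
  · rfl

lemma gRev_colcount (ha : IsZChain k n a) (hb : IsZChain k n b) (hab : a n = b n)
    {c : ℕ} (hc : c < n) :
    ∀ r, r ≤ n → Word.rank (gRev k n a b (c + 1) r) = Word.rank (gRev k n a b c r)
      + ((Finset.range r).filter (fun s => (xRev k n a b c s).isSome)).card := by
  intro r
  induction r with
  | zero =>
    intro _
    rw [gRev_bot ha hb hab c (by omega), gRev_bot ha hb hab (c + 1) (by omega)]
    simp
  | succ r ih =>
    intro hr
    have hrn : r < n := by omega
    have hsq := gRev_rank_sq ha hb hab hc hrn
    have hih := ih (by omega)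
    rw [card_filter_range_succ]
    rw [xCount_isSome] at hsq
    by_cases hP : (xRev k n a b c r).isSome = true
    · rw [if_pos hP] at hsq ⊢; omega
    · rw [if_neg hP] at hsq ⊢; omega

lemma gRev_col_one (ha : IsZChain k n a) (hb : IsZChain k n b) (hab : a n = b n)
    {c : ℕ} (hc : c < n) :
    ((Finset.range n).filter (fun s => (xRev k n a b c s).isSome)).card = 1 := by
  have h := gRev_colcount ha hb hab hc n le_rfl
  have h1 : Word.rank (gRev k n a b c n) = c := by
    rw [gRev_top a b hc le_rfl]
    exact chain_rank hb c (by omega)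
  have h2 : Word.rank (gRev k n a b (c + 1) n) = c + 1 := by
    by_cases he : c + 1 = n
    · rw [gRev_right a b (by omega), he]
      rw [hab]
      exact he ▸ chain_rank hb n le_rfl
    · rw [gRev_top a b (by omega) le_rfl]
      exact chain_rank hb (c + 1) (by omega)
  omega

end Rev

lemma invRule_symm (k : ℕ) (μ₁ μ₂ lam : Word k) :
    invRule k μ₂ μ₁ lam = invRule k μ₁ μ₂ lam := by
  unfold invRule
  by_cases h1 : μ₁ = lam <;> by_cases h2 : μ₂ = lam <;> simp [h1, h2]

section Rev2
variable {k n : ℕ} {a b : ℕ → Word k}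

lemma gRev_transpose (hab : a n = b n) :
    ∀ d c r, c ≤ n → r ≤ n → (n - c) + (n - r) ≤ d → gRev k n b a r c = gRev k n a b c r := by
  intro d
  induction d with
  | zero =>
    intro c r hc hr hm
    rw [gRev_right b a (by omega), gRev_right a b (by omega),
      show c = n by omega, show r = n by omega]
    exact hab.symm
  | succ d ih =>
    intro c r hc hr hm
    by_cases hcn : n ≤ c
    · by_cases hrn : n ≤ r
      · rw [gRev_right b a (by omega), gRev_right a b (by omega),
          show c = n by omega, show r = n by omega]
        exact hab.symm
      · rw [gRev_top b a (by omega) (by omega), gRev_right a b (by omega)]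
    · by_cases hrn : n ≤ r
      · rw [gRev_right b a (by omega), gRev_top a b (by omega) (by omega)]
      · rw [gRev_int b a (by omega) (by omega), gRev_int a b (by omega) (by omega)]
        rw [ih (c + 1) r (by omega) (by omega) (by omega),
          ih c (r + 1) (by omega) (by omega) (by omega),
          ih (c + 1) (r + 1) (by omega) (by omega) (by omega), invRule_symm]

lemma xRev_transpose (hab : a n = b n) {c r : ℕ} (hc : c < n) (hr : r < n) :
    xRev k n b a r c = xRev k n a b c r := by
  unfold xRev
  rw [gRev_transpose hab ((n - (c+1)) + (n - r)) (c + 1) r (by omega) (by omega) le_rfl,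
    gRev_transpose hab ((n - c) + (n - (r+1))) c (r + 1) (by omega) (by omega) le_rfl,
    gRev_transpose hab ((n - (c+1)) + (n - (r+1))) (c + 1) (r + 1) (by omega) (by omega) le_rfl,
    invRule_symm]

lemma gRev_row_one (ha : IsZChain k n a) (hb : IsZChain k n b) (hab : a n = b n)
    {r : ℕ} (hr : r < n) :
    ((Finset.range n).filter (fun t => (xRev k n a b t r).isSome)).card = 1 := by
  have := gRev_col_one hb ha hab.symm (c := r) hr
  rw [← this]
  congr 1
  apply Finset.filter_congr
  intro t ht
  rw [Finset.mem_range] at ht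
  rw [xRev_transpose hab ht hr]

-- the permutation extracted from the reverse diagram
lemma gRev_perm_exists (ha : IsZChain k n a) (hb : IsZChain k n b) (hab : a n = b n) :
    ∃ π : ColoredPerm n k, (∀ c r, c < n → r < n → squareX k n π c r = xRev k n a b c r) := by
  classical
  -- for each c < n there is a unique r < n with an X
  have hcol : ∀ c : Fin n, ∃ r : Fin n,
      ((Finset.range n).filter (fun s => (xRev k n a b (c : ℕ) s).isSome)) = {(r : ℕ)} := by
    intro c
    obtain ⟨r0, hr0⟩ := Finset.card_eq_one.mp (gRev_col_one ha hb hab c.2)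
    have hr0n : r0 < n := by
      have : r0 ∈ (Finset.range n).filter (fun s => (xRev k n a b (c : ℕ) s).isSome) := by
        rw [hr0]; exact Finset.mem_singleton_self r0
      exact Finset.mem_range.1 (Finset.mem_filter.1 this).1
    exact ⟨⟨r0, hr0n⟩, hr0⟩
  choose ρ hρ using hcol
  have hmem : ∀ (c : Fin n) (s : ℕ), s < n →
      ((xRev k n a b (c : ℕ) s).isSome ↔ s = (ρ c : ℕ)) := by
    intro c s hs
    constructor
    · intro h
      have : s ∈ (Finset.range n).filter (fun s => (xRev k n a b (c : ℕ) s).isSome) :=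
        Finset.mem_filter.2 ⟨Finset.mem_range.2 hs, h⟩
      rw [hρ c] at this
      exact Finset.mem_singleton.1 this
    · intro h
      have : (ρ c : ℕ) ∈ (Finset.range n).filter
          (fun s => (xRev k n a b (c : ℕ) s).isSome) := by
        rw [hρ c]; exact Finset.mem_singleton_self _
      rw [h]
      exact (Finset.mem_filter.1 this).2
  have hinj : Function.Injective ρ := by
    intro c c' hcc
    by_contra hne
    have h1 : (xRev k n a b (c : ℕ) (ρ c : ℕ)).isSome :=
      (hmem c (ρ c : ℕ) (ρ c).2).2 rfl
    have h2 : (xRev k n a b (c' : ℕ) (ρ c : ℕ)).isSome := by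
      rw [hcc]; exact (hmem c' (ρ c' : ℕ) (ρ c').2).2 rfl
    have hsub : ({(c : ℕ), (c' : ℕ)} : Finset ℕ) ⊆
        (Finset.range n).filter (fun t => (xRev k n a b t (ρ c : ℕ)).isSome) := by
      intro t ht
      rcases Finset.mem_insert.1 ht with h | h
      · subst h; exact Finset.mem_filter.2 ⟨Finset.mem_range.2 c.2, h1⟩
      · rw [Finset.mem_singleton.1 h]
        exact Finset.mem_filter.2 ⟨Finset.mem_range.2 c'.2, h2⟩
    have hcard2 : ({(c : ℕ), (c' : ℕ)} : Finset ℕ).card = 2 := by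
      rw [Finset.card_insert_of_notMem (by
        simp only [Finset.mem_singleton]
        exact fun h => hne (Fin.ext h)), Finset.card_singleton]
    have := Finset.card_le_card hsub
    rw [hcard2, gRev_row_one ha hb hab (ρ c).2] at this
    omega
  have hbij : Function.Bijective ρ := (Finite.injective_iff_bijective).1 hinj
  -- colors
  have hcolor : ∀ c : Fin n, ∃ j, xRev k n a b (c : ℕ) (ρ c : ℕ) = some j ∧ 1 ≤ j ∧ j ≤ k := by
    intro c
    obtain ⟨j, hj⟩ := Option.isSome_iff_exists.1 ((hmem c (ρ c : ℕ) (ρ c).2).2 rfl)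
    obtain ⟨hs1, hs2, hxc, hgr⟩ := gRev_square ha hb hab c.2 (ρ c).2
    exact ⟨j, hj, (hxc j hj).1, (hxc j hj).2.1⟩
  choose colr hcolr using hcolor
  refine ⟨⟨Equiv.ofBijective ρ hbij, colr, fun c => (hcolr c).2.1, fun c => (hcolr c).2.2⟩,
    ?_⟩
  intro c r hc hr
  unfold squareX
  rw [dif_pos ⟨hc, hr⟩]
  simp only [Equiv.ofBijective_apply]
  by_cases he : (ρ ⟨c, hc⟩ : ℕ) = r
  · rw [if_pos he]
    have := (hcolr ⟨c, hc⟩).1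
    subst he
    exact this.symm
  · rw [if_neg he]
    by_cases hsome : (xRev k n a b c r).isSome = true
    · exfalso
      exact he (((hmem ⟨c, hc⟩ r hr).1 hsome) ▸ rfl)
    · exact (Option.not_isSome_iff_eq_none.1 hsome).symm

lemma growth_eq_gRev (ha : IsZChain k n a) (hb : IsZChain k n b) (hab : a n = b n)
    {π : ColoredPerm n k} (hX : ∀ c r, c < n → r < n → squareX k n π c r = xRev k n a b c r) :
    ∀ c, c ≤ n → ∀ r, r ≤ n → growth k n π c r = gRev k n a b c r := by
  intro c
  induction c with
  | zero =>
    intro _ r hr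
    rw [growth_left, gRev_left_nil ha hb hab r hr]
  | succ c ihc =>
    intro hc r
    induction r with
    | zero =>
      intro _
      rw [growth_bot, gRev_bot ha hb hab (c + 1) hc]
    | succ r ihr =>
      intro hr
      rw [growth_succ, hX c r (by omega) (by omega), ihc (by omega) r (by omega),
        ihc (by omega) (r + 1) (by omega), ihr (by omega)]
      exact (gRev_square ha hb hab (by omega) (by omega)).2.2.2

end Rev2

end KRF

namespace KRF
section Det
variable {k n : ℕ}

lemma squareX_oob {π : ColoredPerm n k} {c r : ℕ} (h : ¬ (c < n ∧ r < n)) :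
    squareX k n π c r = none := by
  unfold squareX
  rw [dif_neg h]

lemma squareX_self (π : ColoredPerm n k) (c : Fin n) :
    squareX k n π (c : ℕ) ((π.perm c : ℕ)) = some (π.color c) := by
  unfold squareX
  rw [dif_pos ⟨c.2, (π.perm c).2⟩, if_pos rfl]

lemma growth_det {π π' : ColoredPerm n k}
    (hR : ∀ r, r ≤ n → growth k n π n r = growth k n π' n r)
    (hT : ∀ c, c ≤ n → growth k n π c n = growth k n π' c n) :
    ∀ d c r, c ≤ n → r ≤ n → (n - c) + (n - r) ≤ d →
      growth k n π c r = growth k n π' c r ∧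
      squareX k n π c r = squareX k n π' c r := by
  intro d
  induction d with
  | zero =>
    intro c r hc hr hm
    have hcn : c = n := by omega
    have hrn : r = n := by omega
    subst hcn; subst hrn
    exact ⟨hR _ le_rfl, by rw [squareX_oob (by omega), squareX_oob (by omega)]⟩
  | succ d ih =>
    intro c r hc hr hm
    by_cases hcn : c = n
    · subst hcn
      exact ⟨hR r hr, by rw [squareX_oob (by omega), squareX_oob (by omega)]⟩
    · by_cases hrn : r = n
      · subst hrn
        exact ⟨hT c hc, by rw [squareX_oob (by omega), squareX_oob (by omega)]⟩
      · have e1 := (ih c (r + 1) (by omega) (by omega) (by omega)).1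
        have e2 := (ih (c + 1) r (by omega) (by omega) (by omega)).1
        have e3 := (ih (c + 1) (r + 1) (by omega) (by omega) (by omega)).1
        have g1 := growth_invRule π c r
        have g2 := growth_invRule π' c r
        rw [e1, e2, e3] at g1
        have hpq := g1.symm.trans g2
        exact ⟨congrArg Prod.fst hpq, congrArg Prod.snd hpq⟩

lemma cp_eq_of_squareX {π π' : ColoredPerm n k}
    (h : ∀ c r, squareX k n π c r = squareX k n π' c r) : π = π' := by
  have hpc : ∀ c : Fin n, π'.perm c = π.perm c ∧ π'.color c = π.color c := by
    intro c
    have h1 := squareX_self π c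
    rw [h (c : ℕ) ((π.perm c : ℕ))] at h1
    obtain ⟨hc, hr, hperm, hcol⟩ := squareX_some h1
    constructor
    · exact hperm
    · exact hcol.symm
  obtain ⟨p, col, pos, le⟩ := π
  obtain ⟨p', col', pos', le'⟩ := π'
  simp only [ColoredPerm.mk.injEq]
  constructor
  · exact Equiv.ext fun c => ((hpc c).1).symm
  · funext c
    exact ((hpc c).2).symm

end Det
end KRF

namespace KRF

/-- For each `k ≥ 1` and `n ≥ 0`, the map `π ↦ (P̂(π), Q̂(π))` given by
Fomin's growth rules on the square diagram is a bijection from the set of `k`-colored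
permutations of length `n` onto the set of pairs of `k`-ribbon Fibonacci path tableaux
with entries `1, …, n` having the same `k`-ribbon Fibonacci shape. -/
theorem growth_bijective (k n : ℕ) (hk : 1 ≤ k) :
    Set.BijOn (fun π : ColoredPerm n k => (PhatTab k n π, QhatTab k n π)) Set.univ
      {PQ : Tab k × Tab k |
        IsPathTab k n PQ.1 ∧ IsPathTab k n PQ.2 ∧ Tab.shape PQ.1 = Tab.shape PQ.2} := by
  have hQchain : ∀ π : ColoredPerm n k, IsZChain k n (QhatChain k n π) := by
    intro π
    have he : QhatChain k n π = PhatChain k n (invCP π) :=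
      funext fun c => (growth_transpose π c n).symm
    rw [he]
    exact Phat_isZChain (invCP π)
  refine ⟨?_, ?_, ?_⟩
  · -- maps to
    intro π _
    refine ⟨⟨PhatChain k n π, Phat_isZChain π, rfl⟩, ⟨QhatChain k n π, hQchain π, rfl⟩, ?_⟩
    have h1 : Tab.shape (PhatTab k n π) = PhatChain k n π n :=
      shape_chainTab (Phat_isZChain π) n le_rfl
    have h2 : Tab.shape (QhatTab k n π) = QhatChain k n π n :=
      shape_chainTab (hQchain π) n le_rfl
    show Tab.shape (PhatTab k n π) = Tab.shape (QhatTab k n π)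
    rw [h1, h2]
    rfl
  · -- injective
    intro π _ π' _ hpair
    simp only [Prod.mk.injEq] at hpair
    have hR : ∀ r, r ≤ n → growth k n π n r = growth k n π' n r :=
      chain_eq_of_chainTab_eq (Phat_isZChain π) (Phat_isZChain π') hpair.1
    have hT : ∀ c, c ≤ n → growth k n π c n = growth k n π' c n :=
      chain_eq_of_chainTab_eq (hQchain π) (hQchain π') hpair.2
    apply cp_eq_of_squareX
    intro c r
    by_cases hcr : c < n ∧ r < n
    · exact (growth_det hR hT ((n - c) + (n - r)) c r (by omega) (by omega) le_rfl).2
    · rw [squareX_oob hcr, squareX_oob hcr]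
  · -- surjective
    intro y hy
    obtain ⟨⟨a, ha, hT1⟩, ⟨b, hb, hT2⟩, hsh⟩ := hy
    have hab : a n = b n := by
      have h1 : Tab.shape y.1 = a n := by rw [hT1]; exact shape_chainTab ha n le_rfl
      have h2 : Tab.shape y.2 = b n := by rw [hT2]; exact shape_chainTab hb n le_rfl
      rw [← h1, ← h2, hsh]
    obtain ⟨π, hX⟩ := gRev_perm_exists ha hb hab
    refine ⟨π, Set.mem_univ _, ?_⟩
    have hgrow := growth_eq_gRev ha hb hab hX
    have hPa : ∀ i, i ≤ n → PhatChain k n π i = a i := by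
      intro i hi
      show growth k n π n i = a i
      rw [hgrow n le_rfl i hi, gRev_right a b le_rfl]
    have hQb : ∀ i, i ≤ n → QhatChain k n π i = b i := by
      intro i hi
      show growth k n π i n = b i
      rw [hgrow i hi n le_rfl]
      by_cases hin : i < n
      · exact gRev_top a b hin le_rfl
      · rw [gRev_right a b (by omega), show i = n by omega, hab]
    show (PhatTab k n π, QhatTab k n π) = y
    have e1 : PhatTab k n π = y.1 := by
      rw [hT1]
      exact chainTab_congr n hPa
    have e2 : QhatTab k n π = y.2 := by
      rw [hT2]
      exact chainTab_congr n hQb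
    rw [e1, e2]
end KRF
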